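/- Let R, A, B, a, b, h, v, T₁, T₂, φ₂, R⁺ and ℤR⁺ be as in the context, with h, v and h∘v having no fixed points. Assume that for every α ∈ A the fiber {s ∈ R : a(s) = α} has at least 3 elements and for every β ∈ B the fiber {s ∈ R : b(s) = β} has at least 3 elements. Then ker(T₁ − id) ∩ ker(T₂ − id) ⊆ φ₂(ℤR⁺), i.e., every element of ℤR killed by both T₁ − id and T₂ − id is the image under φ₂ of an element supported in R⁺. -/
import Mathlib

open Finsupp

private lemma sum_single_eval {R : Type*} [Fintype R] [DecidableEq R] (l : R →₀ ℤ) :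
    l = ∑ t ∈ Finset.univ, Finsupp.single t (l t) := by
  ext x
  rw [Finsupp.finset_sum_apply]
  simp [Finsupp.single_apply]

/-- Evaluation formula for a transition operator. -/
private lemma evalT {R B : Type*} [Fintype R] [Fintype B] [DecidableEq R] [DecidableEq B]
    (b : R → B) (h : R → R) (hh : ∀ t, h (h t) = t)
    (T : (R →₀ ℤ) →ₗ[ℤ] (R →₀ ℤ))
    (hT : ∀ t : R, T (single t 1) =
      (∑ s ∈ Finset.univ.filter fun s => b s = b (h t), single s (1 : ℤ)) - single (h t) 1)
    (l : R →₀ ℤ) (x : R) :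
    T l x = (∑ t ∈ Finset.univ.filter fun t => b (h t) = b x, l t) - l (h x) := by
  have step : ∀ t : R, (T (single t 1)) x
      = (if b (h t) = b x then (1:ℤ) else 0) - (if t = h x then 1 else 0) := by
    intro t
    rw [hT t]
    rw [Finsupp.sub_apply, Finsupp.finset_sum_apply]
    congr 1
    · simp only [Finsupp.single_apply]
      rw [Finset.sum_ite_eq' (Finset.univ.filter fun s => b s = b (h t)) x (fun _ => (1:ℤ))]
      simp [eq_comm]
    · simp only [Finsupp.single_apply]
      have e : (h t = x) ↔ (t = h x) := ⟨fun e => by rw [← e, hh], fun e => by rw [e, hh]⟩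
      rw [if_congr e rfl rfl]
  calc T l x = (T (∑ t ∈ Finset.univ, Finsupp.single t (l t))) x := by rw [← sum_single_eval l]
    _ = ∑ t ∈ Finset.univ, (T (Finsupp.single t (l t))) x := by
        rw [map_sum, Finsupp.finset_sum_apply]
    _ = ∑ t ∈ Finset.univ, l t * ((T (Finsupp.single t 1)) x) := by
        refine Finset.sum_congr rfl fun t _ => ?_
        have : Finsupp.single t (l t) = l t • Finsupp.single t (1:ℤ) := by
          rw [Finsupp.smul_single, smul_eq_mul, mul_one]
        rw [this, map_smul, Finsupp.smul_apply, smul_eq_mul]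
    _ = ∑ t ∈ Finset.univ, (l t * (if b (h t) = b x then (1:ℤ) else 0)
          - l t * (if t = h x then 1 else 0)) := by
        refine Finset.sum_congr rfl fun t _ => ?_
        rw [step t, mul_sub]
    _ = (∑ t ∈ Finset.univ.filter fun t => b (h t) = b x, l t) - l (h x) := by
        rw [Finset.sum_sub_distrib]
        congr 1
        · rw [Finset.sum_filter]
          refine Finset.sum_congr rfl fun t _ => ?_
          by_cases hb : b (h t) = b x <;> simp [hb]
        · simp only [mul_ite, mul_one, mul_zero]
          rw [Finset.sum_ite_eq' Finset.univ (h x) (fun t => l t)]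
          simp

/-- Antisymmetry from a single transition operator with all fibers of size ≥ 3. -/
private lemma anti {R B : Type*} [Fintype R] [Fintype B] [DecidableEq R] [DecidableEq B]
    (b : R → B) (h : R → R) (hh : ∀ t, h (h t) = t)
    (hbfib : ∀ β : B, 3 ≤ (Finset.univ.filter fun s => b s = β).card)
    (l : R →₀ ℤ)
    (heq : ∀ x : R, (∑ t ∈ Finset.univ.filter fun t => b (h t) = b x, l t) - l (h x) = l x) :
    ∀ x, l (h x) = - l x := by
  classical
  set S : B → ℤ := fun β => ∑ t ∈ Finset.univ.filter (fun t => b t = β), l (h t) with hS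
  have hP : ∀ x, l x + l (h x) = S (b x) := by
    intro x
    have hre : (∑ t ∈ Finset.univ.filter fun t => b (h t) = b x, l t) = S (b x) := by
      rw [hS]
      refine Finset.sum_nbij' h h ?_ ?_ ?_ ?_ ?_ <;>
        intro t ht <;> simp_all [Finset.mem_filter, hh]
    have := heq x
    rw [hre] at this
    linarith
  have hSh : ∀ x, S (b (h x)) = S (b x) := by
    intro x
    have h1 := hP x
    have h2 := hP (h x)
    rw [hh] at h2
    linarith
  have hfib2 : ∀ β : B, (∑ t ∈ Finset.univ.filter (fun t => b t = β), l t)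
      = ((Finset.univ.filter fun s => b s = β).card : ℤ) * S β - S β := by
    intro β
    have hsum : ∑ t ∈ Finset.univ.filter (fun t => b t = β), (l t + l (h t))
        = ((Finset.univ.filter fun s => b s = β).card : ℤ) * S β := by
      rw [Finset.sum_congr rfl (fun t ht => ?_), Finset.sum_const, nsmul_eq_mul]
      rw [hP t, (Finset.mem_filter.mp ht).2]
    rw [Finset.sum_add_distrib] at hsum
    have : (∑ t ∈ Finset.univ.filter (fun t => b t = β), l (h t)) = S β := rfl
    rw [this] at hsum
    linarith
  have e2 : ∑ t ∈ Finset.univ, S (b t) * l (h t) = ∑ β ∈ Finset.univ, S β * S β := by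
    rw [← Finset.sum_fiberwise_of_maps_to (fun t _ => Finset.mem_univ (b t))
      (fun t => S (b t) * l (h t))]
    refine Finset.sum_congr rfl fun β _ => ?_
    calc ∑ t ∈ Finset.univ.filter (fun t => b t = β), S (b t) * l (h t)
        = ∑ t ∈ Finset.univ.filter (fun t => b t = β), S β * l (h t) := by
          refine Finset.sum_congr rfl fun t ht => ?_
          rw [(Finset.mem_filter.mp ht).2]
      _ = S β * S β := by rw [← Finset.mul_sum]
  have e3 : ∑ t ∈ Finset.univ, S (b t) * l t
      = ∑ β ∈ Finset.univ, S β * (((Finset.univ.filter fun s => b s = β).card : ℤ) * S β - S β) := by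
    rw [← Finset.sum_fiberwise_of_maps_to (fun t _ => Finset.mem_univ (b t))
      (fun t => S (b t) * l t)]
    refine Finset.sum_congr rfl fun β _ => ?_
    calc ∑ t ∈ Finset.univ.filter (fun t => b t = β), S (b t) * l t
        = ∑ t ∈ Finset.univ.filter (fun t => b t = β), S β * l t := by
          refine Finset.sum_congr rfl fun t ht => ?_
          rw [(Finset.mem_filter.mp ht).2]
      _ = _ := by rw [← Finset.mul_sum, hfib2 β]
  have e1 : ∑ t ∈ Finset.univ, S (b t) * l (h t) = ∑ t ∈ Finset.univ, S (b t) * l t := by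
    calc ∑ t ∈ Finset.univ, S (b t) * l (h t)
        = ∑ t ∈ Finset.univ, S (b (h t)) * l (h t) := by
          refine Finset.sum_congr rfl fun t _ => ?_
          rw [hSh t]
      _ = ∑ t ∈ Finset.univ, S (b t) * l t := by
          refine Finset.sum_nbij' h h ?_ ?_ ?_ ?_ ?_ <;>
            intro t ht <;> simp [hh]
  have key : ∑ β ∈ Finset.univ, (((Finset.univ.filter fun s => b s = β).card : ℤ) - 2) * S β ^ 2
      = 0 := by
    have c1 : ∑ β ∈ Finset.univ,
        (((Finset.univ.filter fun s => b s = β).card : ℤ) - 2) * S β ^ 2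
        = ∑ β ∈ Finset.univ,
          (S β * (((Finset.univ.filter fun s => b s = β).card : ℤ) * S β - S β) - S β * S β) := by
      refine Finset.sum_congr rfl fun β _ => ?_
      ring
    rw [c1, Finset.sum_sub_distrib, ← e3, ← e2, ← e1, sub_self]
  have hS0 : ∀ β, S β = 0 := by
    intro β
    have hterm : ∀ γ ∈ Finset.univ,
        (0:ℤ) ≤ (((Finset.univ.filter fun s => b s = γ).card : ℤ) - 2) * S γ ^ 2 := by
      intro γ _
      have h3 : (3:ℤ) ≤ ((Finset.univ.filter fun s => b s = γ).card : ℤ) := by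
        exact_mod_cast hbfib γ
      have := sq_nonneg (S γ)
      nlinarith
    have hz := (Finset.sum_eq_zero_iff_of_nonneg hterm).mp key β (Finset.mem_univ β)
    have h3 : (3:ℤ) ≤ ((Finset.univ.filter fun s => b s = β).card : ℤ) := by
      exact_mod_cast hbfib β
    have := sq_nonneg (S β)
    nlinarith
  intro x
  have := hP x
  rw [hS0 (b x)] at this
  linarith

theorem stmt_2
    {R A B : Type*} [Fintype R] [Fintype A] [Fintype B]
    [DecidableEq R] [DecidableEq A] [DecidableEq B]
    (a : R → A) (b : R → B) (h v : R → R)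
    (hh : ∀ t, h (h t) = t) (hv : ∀ t, v (v t) = t)
    (hcomm : ∀ t, h (v t) = v (h t))
    (hfix : ∀ t, h t ≠ t) (vfix : ∀ t, v t ≠ t) (hvfix : ∀ t, h (v t) ≠ t)
    (T₁ T₂ : (R →₀ ℤ) →ₗ[ℤ] (R →₀ ℤ))
    (hT₁ : ∀ t : R, T₁ (single t 1) =
      (∑ s ∈ Finset.univ.filter fun s => b s = b (h t), single s (1 : ℤ)) - single (h t) 1)
    (hT₂ : ∀ t : R, T₂ (single t 1) =
      (∑ s ∈ Finset.univ.filter fun s => a s = a (v t), single s (1 : ℤ)) - single (v t) 1)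
    (φ₂ : (R →₀ ℤ) →ₗ[ℤ] (R →₀ ℤ))
    (hφ₂ : ∀ t : R, φ₂ (single t 1) =
      single t 1 - single (v t) 1 - single (h t) 1 + single (h (v t)) 1)
    (Rplus : Set R)
    (hRplus : ∀ t : R, ∃! s, s ∈ Rplus ∧ (s = t ∨ s = h t ∨ s = v t ∨ s = h (v t)))
    (hafib : ∀ α : A, 3 ≤ (Finset.univ.filter fun s => a s = α).card)
    (hbfib : ∀ β : B, 3 ≤ (Finset.univ.filter fun s => b s = β).card) :
    LinearMap.ker (T₁ - LinearMap.id) ⊓ LinearMap.ker (T₂ - LinearMap.id) ≤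
      Submodule.map φ₂ (Finsupp.supported ℤ ℤ Rplus) := by
  classical
  intro l hl
  obtain ⟨hl1, hl2⟩ := Submodule.mem_inf.mp hl
  have hk1 : T₁ l = l := by
    have := LinearMap.mem_ker.mp hl1
    rw [LinearMap.sub_apply, LinearMap.id_apply, sub_eq_zero] at this
    exact this
  have hk2 : T₂ l = l := by
    have := LinearMap.mem_ker.mp hl2
    rw [LinearMap.sub_apply, LinearMap.id_apply, sub_eq_zero] at this
    exact this
  have lh : ∀ x, l (h x) = - l x := by
    refine anti b h hh hbfib l fun x => ?_
    rw [← evalT b h hh T₁ hT₁ l x, hk1]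
  have lv : ∀ x, l (v x) = - l x := by
    refine anti a v hv hafib l fun x => ?_
    rw [← evalT a v hv T₂ hT₂ l x, hk2]
  -- μ : restriction of l to Rplus
  set μ : R →₀ ℤ := Finsupp.equivFunOnFinite.symm
    (fun y => if y ∈ Rplus then l y else 0) with hμ
  have hμval : ∀ y, μ y = if y ∈ Rplus then l y else 0 := by
    intro y
    rw [hμ]
    rfl
  refine ⟨μ, ?_, ?_⟩
  · show μ ∈ Finsupp.supported ℤ ℤ Rplus
    rw [Finsupp.mem_supported']
    intro y hy
    rw [hμval y, if_neg hy]
  · -- evaluation formula for φ₂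
    have evalφ : ∀ (m : R →₀ ℤ) (x : R),
        φ₂ m x = m x - m (v x) - m (h x) + m (h (v x)) := by
      intro m x
      have step : ∀ t : R, (φ₂ (single t 1)) x
          = (if t = x then (1:ℤ) else 0) - (if t = v x then 1 else 0)
            - (if t = h x then 1 else 0) + (if t = v (h x) then 1 else 0) := by
        intro t
        rw [hφ₂ t]
        rw [Finsupp.add_apply, Finsupp.sub_apply, Finsupp.sub_apply]
        simp only [Finsupp.single_apply]
        have e1 : (v t = x) ↔ (t = v x) := ⟨fun e => by rw [← e, hv], fun e => by rw [e, hv]⟩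
        have e2 : (h t = x) ↔ (t = h x) := ⟨fun e => by rw [← e, hh], fun e => by rw [e, hh]⟩
        have e3 : (h (v t) = x) ↔ (t = v (h x)) := by
          constructor
          · intro e
            have : v (h (h (v t))) = v (h x) := by rw [e]
            rwa [hh, hv] at this
          · intro e
            rw [e, hv, hh]
        rw [if_congr e1 rfl rfl, if_congr e2 rfl rfl, if_congr e3 rfl rfl]
      calc φ₂ m x = (φ₂ (∑ t ∈ Finset.univ, Finsupp.single t (m t))) x := by
            rw [← sum_single_eval m]
        _ = ∑ t ∈ Finset.univ, m t * ((φ₂ (Finsupp.single t 1)) x) := by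
            rw [map_sum, Finsupp.finset_sum_apply]
            refine Finset.sum_congr rfl fun t _ => ?_
            have : Finsupp.single t (m t) = m t • Finsupp.single t (1:ℤ) := by
              rw [Finsupp.smul_single, smul_eq_mul, mul_one]
            rw [this, map_smul, Finsupp.smul_apply, smul_eq_mul]
        _ = m x - m (v x) - m (h x) + m (h (v x)) := by
            simp only [step, mul_add, mul_sub, mul_ite, mul_one, mul_zero]
            rw [Finset.sum_add_distrib, Finset.sum_sub_distrib, Finset.sum_sub_distrib]
            rw [Finset.sum_ite_eq' Finset.univ x (fun t => m t),
              Finset.sum_ite_eq' Finset.univ (v x) (fun t => m t),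
              Finset.sum_ite_eq' Finset.univ (h x) (fun t => m t),
              Finset.sum_ite_eq' Finset.univ (v (h x)) (fun t => m t)]
            simp [hcomm]
    ext x
    rw [evalφ μ x]
    obtain ⟨s, ⟨hsR, hsor⟩, huniq⟩ := hRplus x
    have mem_eq : ∀ y, (y = x ∨ y = h x ∨ y = v x ∨ y = h (v x)) → y ∈ Rplus → y = s :=
      fun y hy hyR => huniq y ⟨hyR, hy⟩
    -- distinctness facts
    have d_hx : h x ≠ x := hfix x
    have d_vx : v x ≠ x := vfix x
    have d_hvx : h (v x) ≠ x := hvfix x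
    have d_hv : h x ≠ v x := by
      intro e
      apply hvfix x
      have : v (h x) = v (v x) := by rw [e]
      rw [hv] at this
      rw [hcomm, this]
    have d_h_hv : h x ≠ h (v x) := by
      intro e
      apply d_vx
      have : h (h x) = h (h (v x)) := by rw [e]
      rw [hh, hh] at this
      exact this.symm
    have d_v_hv : v x ≠ h (v x) := fun e => hfix (v x) e.symm
    rcases hsor with h1 | h1 | h1 | h1 <;> rw [h1] at hsR mem_eq
    · -- s = x
      have n1 : v x ∉ Rplus := fun hm => d_vx (mem_eq _ (Or.inr (Or.inr (Or.inl rfl))) hm)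
      have n2 : h x ∉ Rplus := fun hm => d_hx (mem_eq _ (Or.inr (Or.inl rfl)) hm)
      have n3 : h (v x) ∉ Rplus := fun hm => d_hvx (mem_eq _ (Or.inr (Or.inr (Or.inr rfl))) hm)
      rw [hμval, hμval, hμval, hμval, if_pos hsR, if_neg n1, if_neg n2, if_neg n3]
      ring
    · -- s = h x
      have n0 : x ∉ Rplus := fun hm => d_hx ((mem_eq _ (Or.inl rfl) hm).symm)
      have n1 : v x ∉ Rplus := fun hm =>
        d_hv ((mem_eq _ (Or.inr (Or.inr (Or.inl rfl))) hm).symm)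
      have n3 : h (v x) ∉ Rplus := fun hm =>
        d_h_hv (mem_eq _ (Or.inr (Or.inr (Or.inr rfl))) hm).symm
      rw [hμval, hμval, hμval, hμval, if_neg n0, if_neg n1, if_pos hsR, if_neg n3]
      rw [lh x]
      ring
    · -- s = v x
      have n0 : x ∉ Rplus := fun hm => d_vx ((mem_eq _ (Or.inl rfl) hm).symm)
      have n2 : h x ∉ Rplus := fun hm => d_hv (mem_eq _ (Or.inr (Or.inl rfl)) hm)
      have n3 : h (v x) ∉ Rplus := fun hm =>
        d_v_hv ((mem_eq _ (Or.inr (Or.inr (Or.inr rfl))) hm).symm)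
      rw [hμval, hμval, hμval, hμval, if_neg n0, if_pos hsR, if_neg n2, if_neg n3]
      rw [lv x]
      ring
    · -- s = h (v x)
      have n0 : x ∉ Rplus := fun hm => d_hvx ((mem_eq _ (Or.inl rfl) hm).symm)
      have n1 : v x ∉ Rplus := fun hm =>
        d_v_hv (mem_eq _ (Or.inr (Or.inr (Or.inl rfl))) hm)
      have n2 : h x ∉ Rplus := fun hm => d_h_hv (mem_eq _ (Or.inr (Or.inl rfl)) hm)
      rw [hμval, hμval, hμval, hμval, if_neg n0, if_neg n1, if_neg n2, if_pos hsR]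
      have : l (h (v x)) = l x := by rw [lh (v x), lv x]; ring
      rw [this]
      ring
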